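/- Let S be a nonempty finite set and P : S × S → ℝ a stochastic matrix, i.e., P(i,j) ≥ 0 for all i, j and Σ_{j∈S} P(i,j) = 1 for every i. Let c = Σ_{j∈S} min_{i∈S} P(i,j). Then for any two probability vectors μ, ν on S (μ(i), ν(i) ≥ 0, Σ_i μ(i) = Σ_i ν(i) = 1) and every n ≥ 0, the total variation distance of the n-step distributions satisfies (1/2) Σ_{j∈S} | (μ Pⁿ)(j) − (ν Pⁿ)(j) | ≤ (1 − c)ⁿ, where (μ Pⁿ)(j) = Σ_{i} μ(i) (Pⁿ)(i,j) and Pⁿ is the n-th matrix power of P. -/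
import Mathlib


open Finset

/-- Lemma 3.4 (Doeblin coupling bound): for a stochastic matrix `P` on a finite
state space with minorization constant `c = Σ_j min_i P i j`, the `n`-step
distributions from any two initial probability vectors contract in total
variation at geometric rate `1 − c`. -/
theorem doeblin_total_variation_contraction
    {S : Type*} [Fintype S] [DecidableEq S] [Nonempty S]
    (P : Matrix S S ℝ)
    (hP0 : ∀ i j, 0 ≤ P i j) (hP1 : ∀ i, ∑ j, P i j = 1)
    (c : ℝ) (hc : c = ∑ j, univ.inf' univ_nonempty (fun i => P i j))
    (μ ν : S → ℝ) (hμ0 : ∀ i, 0 ≤ μ i) (hν0 : ∀ i, 0 ≤ ν i)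
    (hμ1 : ∑ i, μ i = 1) (hν1 : ∑ i, ν i = 1) (n : ℕ) :
    (1 / 2) * ∑ j, |(∑ i, μ i * (P ^ n) i j) - ∑ i, ν i * (P ^ n) i j|
      ≤ (1 - c) ^ n := by
  -- notation for the min column vector
  set m : S → ℝ := fun j => univ.inf' univ_nonempty (fun i => P i j) with hm
  have hmle : ∀ j i, m j ≤ P i j := fun j i => inf'_le _ (mem_univ i)
  obtain ⟨i₀⟩ := ‹Nonempty S›
  have hc1 : c ≤ 1 := by
    rw [hc, ← hP1 i₀]
    exact Finset.sum_le_sum fun j _ => hmle j i₀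
  have h1c : (0:ℝ) ≤ 1 - c := by linarith
  -- rows of P^n sum to 1
  have hrow : ∀ (k : ℕ) (i : S), ∑ j, (P ^ k) i j = 1 := by
    intro k
    induction k with
    | zero => intro i; simp [Matrix.one_apply]
    | succ k ih =>
      intro i
      have : (P ^ (k+1)) = (P ^ k) * P := pow_succ P k
      simp only [this, Matrix.mul_apply]
      rw [Finset.sum_comm]
      calc ∑ a, ∑ j, (P ^ k) i a * P a j
          = ∑ a, (P ^ k) i a * ∑ j, P a j := by
            refine Finset.sum_congr rfl fun a _ => ?_
            rw [Finset.mul_sum]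
        _ = 1 := by simp only [hP1, mul_one]; exact ih i
  -- key contraction step
  have key : ∀ (f : S → ℝ), (∑ i, f i) = 0 →
      ∑ j, |∑ i, f i * P i j| ≤ (1 - c) * ∑ i, |f i| := by
    intro f hf
    have step1 : ∀ j, (∑ i, f i * P i j) = ∑ i, f i * (P i j - m j) := by
      intro j
      simp only [mul_sub, Finset.sum_sub_distrib, ← Finset.sum_mul, hf, zero_mul, sub_zero]
    calc ∑ j, |∑ i, f i * P i j|
        ≤ ∑ j, ∑ i, |f i| * (P i j - m j) := by
          refine Finset.sum_le_sum fun j _ => ?_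
          rw [step1 j]
          refine (Finset.abs_sum_le_sum_abs _ _).trans ?_
          refine Finset.sum_le_sum fun i _ => ?_
          rw [abs_mul, abs_of_nonneg (sub_nonneg.2 (hmle j i))]
      _ = ∑ i, |f i| * (1 - c) := by
          rw [Finset.sum_comm]
          refine Finset.sum_congr rfl fun i _ => ?_
          rw [← Finset.mul_sum, Finset.sum_sub_distrib, hP1, hc]
      _ = (1 - c) * ∑ i, |f i| := by rw [← Finset.sum_mul, mul_comm]
  -- main induction
  have main : ∀ k : ℕ,
      ∑ j, |(∑ i, μ i * (P ^ k) i j) - ∑ i, ν i * (P ^ k) i j| ≤ 2 * (1 - c) ^ k := by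
    intro k
    induction k with
    | zero =>
      simp only [pow_zero, Matrix.one_apply]
      have : ∀ j, (∑ i, μ i * (if i = j then (1:ℝ) else 0))
          - ∑ i, ν i * (if i = j then (1:ℝ) else 0) = μ j - ν j := by
        intro j; simp [mul_ite]
      rw [Finset.sum_congr rfl fun j _ => by rw [this j]]
      calc ∑ j, |μ j - ν j| ≤ ∑ j, (μ j + ν j) := by
            refine Finset.sum_le_sum fun j _ => ?_
            rw [abs_sub_le_iff]
            constructor <;> nlinarith [hμ0 j, hν0 j]
        _ = 2 := by rw [Finset.sum_add_distrib, hμ1, hν1]; norm_num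
        _ ≤ 2 * (1 - c) ^ 0 := by norm_num
    | succ k ih =>
      set f : S → ℝ := fun j => (∑ i, μ i * (P ^ k) i j) - ∑ i, ν i * (P ^ k) i j with hfdef
      have hf0 : ∑ j, f j = 0 := by
        simp only [hfdef, Finset.sum_sub_distrib]
        rw [Finset.sum_comm]
        nth_rewrite 2 [Finset.sum_comm]
        have h1 : ∀ (w : S → ℝ), ∑ i, ∑ j, w i * (P ^ k) i j = ∑ i, w i := by
          intro w
          refine Finset.sum_congr rfl fun i _ => ?_
          rw [← Finset.mul_sum, hrow k i, mul_one]
        rw [h1 μ, h1 ν, hμ1, hν1, sub_self]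
      have hstep : ∀ j, (∑ i, μ i * (P ^ (k+1)) i j) - ∑ i, ν i * (P ^ (k+1)) i j
          = ∑ a, f a * P a j := by
        intro j
        have hpow : (P ^ (k+1)) = (P ^ k) * P := pow_succ P k
        simp only [hpow, Matrix.mul_apply, Finset.mul_sum]
        rw [Finset.sum_comm]
        nth_rewrite 2 [Finset.sum_comm]
        simp only [hfdef, sub_mul, Finset.sum_sub_distrib, Finset.sum_mul]
        congr 1 <;>
        · refine Finset.sum_congr rfl fun a _ => Finset.sum_congr rfl fun i _ => ?_
          ring
      calc ∑ j, |(∑ i, μ i * (P ^ (k+1)) i j) - ∑ i, ν i * (P ^ (k+1)) i j|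
          = ∑ j, |∑ a, f a * P a j| := by
            exact Finset.sum_congr rfl fun j _ => by rw [hstep j]
        _ ≤ (1 - c) * ∑ a, |f a| := key f hf0
        _ ≤ (1 - c) * (2 * (1 - c) ^ k) := by
            exact mul_le_mul_of_nonneg_left ih h1c
        _ = 2 * (1 - c) ^ (k+1) := by ring
  have := main n
  linarith
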